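/- Let E be a real inner product space, let f : E → ℝ be γ-strongly convex and differentiable with β-Lipschitz gradient where 0 < γ ≤ β, and let 0 ≤ α ≤ 2/(β + γ). Then the gradient update map G(w) = w − α∇f(w) is (1 − βγα/(β + γ))-expansive, i.e. ‖G(w) − G(w')‖ ≤ (1 − βγα/(β + γ))·‖w − w'‖ for all w, w' ∈ E. -/

import Mathlib

set_option maxHeartbeats 1000000

open scoped RealInnerProductSpace

section AuxiliaryLemmas
variable {E : Type*} [NormedAddCommGroup E] [InnerProductSpace ℝ E]

lemma line_hasDerivAt (g : E → ℝ) (g' : E → E)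
    (hg : ∀ x, HasFDerivAt g (InnerProductSpace.toDualMap ℝ E (g' x)) x)
    (x v : E) (t : ℝ) :
    HasDerivAt (fun s : ℝ => g (x + s • v)) ⟪g' (x + t • v), v⟫ t := by
  have hc : HasDerivAt (fun s : ℝ => x + s • v) v t := by
    simpa using ((hasDerivAt_id t).smul_const v).const_add x
  exact (hg (x + t • v)).comp_hasDerivAt t hc


lemma convex_lower_bound (g : E → ℝ) (g' : E → E)
    (hconv : ConvexOn ℝ Set.univ g)
    (hg : ∀ x, HasFDerivAt g (InnerProductSpace.toDualMap ℝ E (g' x)) x)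
    (x y : E) : g x + ⟪g' x, y - x⟫ ≤ g y := by
  set v := y - x with hv
  set φ : ℝ → ℝ := fun s => g (x + s • v) with hφ
  have hd : HasDerivAt φ ⟪g' x, v⟫ 0 := by
    simpa using line_hasDerivAt g g' hg x v 0
  have hxy : x + (1:ℝ) • v = y := by simp [hv]
  have hslope : ∀ t ∈ Set.Ioc (0:ℝ) 1, slope φ 0 t ≤ g y - g x := by
    intro t ht
    have hcvx := hconv.2 (Set.mem_univ x) (Set.mem_univ y)
      (by linarith [ht.1, ht.2] : (0:ℝ) ≤ 1 - t) ht.1.le (by ring)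
    have hpt : (1 - t) • x + t • y = x + t • v := by
      simp [hv, smul_sub, sub_smul]; abel
    rw [hpt] at hcvx
    have : φ t - φ 0 ≤ t * (g y - g x) := by
      simp only [hφ, zero_smul, add_zero]
      have : g (x + t • v) ≤ (1 - t) * g x + t * g y := hcvx
      nlinarith
    rw [slope_def_field]
    simp only [div_eq_iff, sub_zero] at *
    rw [div_le_iff₀ ht.1]
    linarith
  have htend : Filter.Tendsto (slope φ 0) (nhdsWithin 0 (Set.Ioi 0)) (nhds ⟪g' x, v⟫) :=
    (hasDerivAt_iff_tendsto_slope.mp hd).mono_left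
      (nhdsWithin_mono 0 (fun t ht => Set.mem_compl_singleton_iff.mpr (ne_of_gt ht)))
  have hle : ⟪g' x, v⟫ ≤ g y - g x := by
    refine le_of_tendsto htend ?_
    filter_upwards [Ioc_mem_nhdsGT_of_mem ⟨le_refl 0, zero_lt_one⟩] with t ht
    exact hslope t ht
  linarith

lemma descent_lemma (g : E → ℝ) (g' : E → E) (L : ℝ) (hL : 0 ≤ L)
    (hg : ∀ x, HasFDerivAt g (InnerProductSpace.toDualMap ℝ E (g' x)) x)
    (hlip : ∀ a b, ‖g' a - g' b‖ ≤ L * ‖a - b‖)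
    (x y : E) : g y ≤ g x + ⟪g' x, y - x⟫ + L / 2 * ‖y - x‖ ^ 2 := by
  set v := y - x with hv
  set φ : ℝ → ℝ := fun s => g (x + s • v) with hφ
  have hder : ∀ t, HasDerivAt φ ⟪g' (x + t • v), v⟫ t := line_hasDerivAt g g' hg x v
  have hcontg' : Continuous g' := by
    have : LipschitzWith (Real.toNNReal L) g' := by
      apply LipschitzWith.of_dist_le_mul
      intro a b
      simpa [dist_eq_norm, Real.coe_toNNReal L hL] using hlip a b
    exact this.continuous
  have hcont : Continuous fun t : ℝ => ⟪g' (x + t • v), v⟫ := by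
    apply Continuous.inner
    · exact hcontg'.comp (by continuity)
    · exact continuous_const
  have hxy : x + (1:ℝ) • v = y := by simp [hv]
  have heq : φ 1 - φ 0 = ∫ t in (0:ℝ)..1, ⟪g' (x + t • v), v⟫ :=
    (intervalIntegral.integral_eq_sub_of_hasDerivAt (fun t _ => hder t)
      (hcont.intervalIntegrable 0 1)).symm
  have hmono : ∫ t in (0:ℝ)..1, ⟪g' (x + t • v), v⟫
      ≤ ∫ t in (0:ℝ)..1, (⟪g' x, v⟫ + L * ‖v‖ ^ 2 * t) := by
    apply intervalIntegral.integral_mono_on zero_le_one (hcont.intervalIntegrable 0 1)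
      ((continuous_const.add (continuous_const.mul continuous_id)).intervalIntegrable 0 1)
    intro t ht
    have h1 : ⟪g' (x + t • v) - g' x, v⟫ ≤ ‖g' (x + t • v) - g' x‖ * ‖v‖ :=
      real_inner_le_norm _ _
    have h2 : ‖g' (x + t • v) - g' x‖ ≤ L * (t * ‖v‖) := by
      have := hlip (x + t • v) x
      simpa [norm_smul, abs_of_nonneg ht.1] using this
    have h3 : ⟪g' (x + t • v), v⟫ = ⟪g' x, v⟫ + ⟪g' (x + t • v) - g' x, v⟫ := by
      rw [inner_sub_left]; ring
    have hnv : (0:ℝ) ≤ ‖v‖ := norm_nonneg v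
    simp only [Pi.add_apply, Pi.mul_apply, id_eq]
    nlinarith [mul_le_mul_of_nonneg_right h2 hnv]
  have hval : ∫ t in (0:ℝ)..1, (⟪g' x, v⟫ + L * ‖v‖ ^ 2 * t)
      = ⟪g' x, v⟫ + L / 2 * ‖v‖ ^ 2 := by
    have hI : IntervalIntegrable (fun t : ℝ => L * ‖v‖ ^ 2 * t) MeasureTheory.volume 0 1 :=
      (continuous_const.mul continuous_id').intervalIntegrable 0 1
    rw [intervalIntegral.integral_add intervalIntegrable_const hI]
    rw [intervalIntegral.integral_const, intervalIntegral.integral_const_mul, integral_id]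
    norm_num; ring
  have hxy' : x + v = y := by simp [hv]
  have hφ1 : φ 1 = g y := by simp [hφ, hxy']
  have hφ0 : φ 0 = g x := by simp [hφ]
  linarith [heq, hmono, hval.le, hval.ge]

lemma cocoercivity (g : E → ℝ) (g' : E → E) (L : ℝ) (hL : 0 < L)
    (hconv : ConvexOn ℝ Set.univ g)
    (hg : ∀ x, HasFDerivAt g (InnerProductSpace.toDualMap ℝ E (g' x)) x)
    (hdesc : ∀ x y, g y ≤ g x + ⟪g' x, y - x⟫ + L / 2 * ‖y - x‖ ^ 2)
    (x y : E) : (1 / L) * ‖g' y - g' x‖ ^ 2 ≤ ⟪g' y - g' x, y - x⟫ := by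
  have key : ∀ a b : E, (1 / (2 * L)) * ‖g' b - g' a‖ ^ 2 ≤ g b - g a - ⟪g' a, b - a⟫ := by
    intro a b
    set h := g' b - g' a with hh
    set z := b - (1 / L) • h with hz
    have h1 := hdesc b z
    have h2 := convex_lower_bound g g' hconv hg a z
    have e1 : z - b = -((1 / L) • h) := by rw [hz]; abel
    have e2 : ⟪g' b, z - b⟫ = -(1 / L) * ⟪g' b, h⟫ := by
      rw [e1, inner_neg_right, real_inner_smul_right]; ring
    have e3 : ‖z - b‖ ^ 2 = (1 / L) ^ 2 * ‖h‖ ^ 2 := by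
      rw [e1, norm_neg, norm_smul, mul_pow, Real.norm_eq_abs, sq_abs]
    have e4 : ⟪g' a, z - a⟫ = ⟪g' a, b - a⟫ - (1 / L) * ⟪g' a, h⟫ := by
      have : z - a = (b - a) - (1 / L) • h := by rw [hz]; abel
      rw [this, inner_sub_right, real_inner_smul_right]
    have e5 : ⟪g' b, h⟫ - ⟪g' a, h⟫ = ‖h‖ ^ 2 := by
      rw [← inner_sub_left, ← hh, real_inner_self_eq_norm_sq]
    rw [e2, e3] at h1
    rw [e4] at h2
    have hL2 : (0:ℝ) < 2 * L := by linarith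
    have expand : L / 2 * ((1 / L) ^ 2 * ‖h‖ ^ 2) = 1 / (2 * L) * ‖h‖ ^ 2 := by
      field_simp
    have e7 : (1 / L) * ‖h‖ ^ 2 = 1 / (2 * L) * ‖h‖ ^ 2 + 1 / (2 * L) * ‖h‖ ^ 2 := by
      field_simp; ring
    have e8 : (1 / L) * (⟪g' b, h⟫ - ⟪g' a, h⟫) = (1 / L) * ‖h‖ ^ 2 := by rw [e5]
    linarith [h1, h2, e7, e8, expand.le, expand.ge]
  have k1 := key x y
  have k2 := key y x
  have hn : ‖g' x - g' y‖ = ‖g' y - g' x‖ := norm_sub_rev _ _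
  have hi1 : ⟪g' y, x - y⟫ = -⟪g' y, y - x⟫ := by
    rw [show x - y = -(y - x) by abel, inner_neg_right]
  have hi2 : ⟪g' y - g' x, y - x⟫ = ⟪g' y, y - x⟫ - ⟪g' x, y - x⟫ := inner_sub_left _ _ _
  rw [hn] at k2
  have hL2 : (0:ℝ) < 2 * L := by linarith
  have e9 : 1 / (2 * L) * ‖g' y - g' x‖ ^ 2 + 1 / (2 * L) * ‖g' y - g' x‖ ^ 2
      = (1 / L) * ‖g' y - g' x‖ ^ 2 := by field_simp; ring
  linarith [k1, k2, e9]

end AuxiliaryLemmas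


/-- **Lemma 4(c).** Let `E` be a real inner product space, `f : E → ℝ` be `γ`-strongly convex and
differentiable with `β`-Lipschitz gradient `f'`, where `0 < γ ≤ β`, and `0 ≤ α ≤ 2/(β + γ)`.
Then the gradient update map `G w = w - α • f' w` is `(1 - βγα/(β + γ))`-expansive. -/
theorem sgd_update_contractive_strongly_convex_smooth
    {E : Type*} [NormedAddCommGroup E] [InnerProductSpace ℝ E]
    (f : E → ℝ) (f' : E → E) (β γ α : ℝ) (hγ : 0 < γ) (hγβ : γ ≤ β)
    (hα : 0 ≤ α) (hα2 : α ≤ 2 / (β + γ))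
    (hsconv : ConvexOn ℝ Set.univ (fun w => f w - γ / 2 * ‖w‖ ^ 2))
    (hdiff : ∀ x, HasFDerivAt f (InnerProductSpace.toDualMap ℝ E (f' x)) x)
    (hlip : ∀ x y, ‖f' x - f' y‖ ≤ β * ‖x - y‖)
    (w w' : E) :
    ‖(w - α • f' w) - (w' - α • f' w')‖ ≤ (1 - β * γ * α / (β + γ)) * ‖w - w'‖ := by
  have hβ : 0 < β := lt_of_lt_of_le hγ hγβ
  have hS : (0:ℝ) < β + γ := by linarith
  set v := w - w' with hv
  set d := f' w - f' w' with hd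
  set g : E → ℝ := fun u => f u - γ / 2 * ‖u‖ ^ 2 with hgdef
  set g' : E → E := fun u => f' u - γ • u with hg'def
  have hgderiv : ∀ x, HasFDerivAt g (InnerProductSpace.toDualMap ℝ E (g' x)) x := by
    intro x
    have h1 : HasFDerivAt (fun u : E => ‖u‖ ^ 2) (2 • (innerSL ℝ x)) x :=
      (hasStrictFDerivAt_norm_sq x).hasFDerivAt
    have h2 : HasFDerivAt (fun u : E => γ / 2 * ‖u‖ ^ 2) ((γ / 2) • (2 • (innerSL ℝ x))) x :=
      h1.const_mul (γ / 2)
    have h3 := (hdiff x).sub h2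
    refine h3.congr_fderiv ?_
    ext u
    simp [hg'def, inner_sub_left, real_inner_smul_left]
    ring
  have hident : ∀ x y : E, g y - g x - ⟪g' x, y - x⟫
      = f y - f x - ⟪f' x, y - x⟫ - γ / 2 * ‖y - x‖ ^ 2 := by
    intro x y
    have hn : ‖y‖ ^ 2 = ‖x‖ ^ 2 + 2 * ⟪x, y - x⟫ + ‖y - x‖ ^ 2 := by
      have := norm_add_sq_real x (y - x)
      rwa [add_sub_cancel] at this
    simp only [hgdef, hg'def, inner_sub_left, real_inner_smul_left]
    linear_combination (-γ / 2) * hn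
  have hdesc_f := descent_lemma f f' β hβ.le hdiff hlip
  have key_eps : ∀ ε : ℝ, 0 < ε →
      (β + ε) * γ * ‖v‖ ^ 2 + ‖d‖ ^ 2 ≤ ((β + ε) + γ) * ⟪d, v⟫ := by
    intro ε hε
    have hLpos : (0:ℝ) < β + ε - γ := by linarith
    have hdesc : ∀ x y, g y ≤ g x + ⟪g' x, y - x⟫ + (β + ε - γ) / 2 * ‖y - x‖ ^ 2 := by
      intro x y
      have h1 := hdesc_f x y
      have h2 := hident x y
      nlinarith [sq_nonneg ‖y - x‖]
    have hco := cocoercivity g g' (β + ε - γ) hLpos hsconv hgderiv hdesc w' w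
    have hgv : g' w - g' w' = d - γ • v := by
      simp only [hg'def, hd, hv, smul_sub]; abel
    have hww : w - w' = v := hv.symm
    rw [hgv, hww] at hco
    have hinner : ⟪d - γ • v, v⟫ = ⟪d, v⟫ - γ * ‖v‖ ^ 2 := by
      rw [inner_sub_left, real_inner_smul_left, real_inner_self_eq_norm_sq]
    have hnorm : ‖d - γ • v‖ ^ 2 = ‖d‖ ^ 2 - 2 * γ * ⟪d, v⟫ + γ ^ 2 * ‖v‖ ^ 2 := by
      rw [norm_sub_sq_real, real_inner_smul_right, norm_smul, mul_pow,
        Real.norm_eq_abs, sq_abs]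
      ring
    rw [hinner, hnorm] at hco
    have hmul := mul_le_mul_of_nonneg_left hco hLpos.le
    have hcancel : (β + ε - γ) * (1 / (β + ε - γ)
        * (‖d‖ ^ 2 - 2 * γ * ⟪d, v⟫ + γ ^ 2 * ‖v‖ ^ 2))
        = ‖d‖ ^ 2 - 2 * γ * ⟪d, v⟫ + γ ^ 2 * ‖v‖ ^ 2 := by
      field_simp
    rw [hcancel] at hmul
    nlinarith [hmul]
  have key : β * γ * ‖v‖ ^ 2 + ‖d‖ ^ 2 ≤ (β + γ) * ⟪d, v⟫ := by
    have hcont : ContinuousWithinAt (fun ε : ℝ =>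
        ((β + ε) + γ) * ⟪d, v⟫ - ((β + ε) * γ * ‖v‖ ^ 2 + ‖d‖ ^ 2)) (Set.Ioi 0) 0 := by
      apply Continuous.continuousWithinAt
      have c1 : Continuous fun ε : ℝ => (β + ε) + γ :=
        (continuous_const.add continuous_id).add continuous_const
      have c2 : Continuous fun ε : ℝ => β + ε := continuous_const.add continuous_id
      exact (c1.mul continuous_const).sub (((c2.mul continuous_const).mul continuous_const).add continuous_const)
    have hev : ∀ᶠ ε in nhdsWithin 0 (Set.Ioi 0),
        0 ≤ ((β + ε) + γ) * ⟪d, v⟫ - ((β + ε) * γ * ‖v‖ ^ 2 + ‖d‖ ^ 2) :=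
      eventually_nhdsWithin_of_forall (fun ε hε => sub_nonneg.mpr (key_eps ε hε))
    have h0 := ge_of_tendsto hcont hev
    simp only [add_zero] at h0
    linarith
  have hgoal_lhs : (w - α • f' w) - (w' - α • f' w') = v - α • d := by
    simp only [hv, hd, smul_sub]; abel
  rw [hgoal_lhs]
  have hexp : ‖v - α • d‖ ^ 2 = ‖v‖ ^ 2 - 2 * α * ⟪d, v⟫ + α ^ 2 * ‖d‖ ^ 2 := by
    rw [norm_sub_sq_real, real_inner_smul_right, norm_smul, mul_pow,
      Real.norm_eq_abs, sq_abs, real_inner_comm]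
    ring
  have hαS : α * (β + γ) ≤ 2 := by
    rw [← le_div_iff₀ hS]; exact hα2
  have hβγ0 : (0:ℝ) ≤ β * γ := by positivity
  have hc : β * γ * α ≤ β + γ := by
    nlinarith [mul_le_mul_of_nonneg_left hαS hβγ0, sq_nonneg β, sq_nonneg γ]
  have P1 : 0 ≤ α * (β + γ) * ((β + γ) * ⟪d, v⟫ - (β * γ * ‖v‖ ^ 2 + ‖d‖ ^ 2)) :=
    mul_nonneg (mul_nonneg hα hS.le) (sub_nonneg.mpr key)
  have P2 : 0 ≤ (α * (β + γ)) * (2 - α * (β + γ)) * ‖d‖ ^ 2 :=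
    mul_nonneg (mul_nonneg (mul_nonneg hα hS.le) (by linarith)) (sq_nonneg _)
  have P3 : (0:ℝ) ≤ (α * β * γ) ^ 2 * ‖v‖ ^ 2 := by positivity
  have hsq : (β + γ) ^ 2 * ‖v - α • d‖ ^ 2
      ≤ ((β + γ) - β * γ * α) ^ 2 * ‖v‖ ^ 2 := by
    nlinarith [hexp, P1, P2, P3]
  have hb0 : 0 ≤ 1 - β * γ * α / (β + γ) := by
    rw [sub_nonneg, div_le_one hS]; exact hc
  have ha2 : ‖v - α • d‖ ^ 2 ≤ ((1 - β * γ * α / (β + γ)) * ‖v‖) ^ 2 := by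
    have h1 : (1 - β * γ * α / (β + γ)) * (β + γ) = (β + γ) - β * γ * α := by
      rw [sub_mul, div_mul_cancel₀ _ (ne_of_gt hS), one_mul]
    have hfac : ((β + γ) - β * γ * α) ^ 2
        = (1 - β * γ * α / (β + γ)) ^ 2 * (β + γ) ^ 2 := by
      rw [← mul_pow, h1]
    have hS2 : (0:ℝ) < (β + γ) ^ 2 := by positivity
    rw [hfac] at hsq
    rw [mul_pow]
    nlinarith [hsq, hS2]
  calc ‖v - α • d‖ = Real.sqrt (‖v - α • d‖ ^ 2) := (Real.sqrt_sq (norm_nonneg _)).symm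
    _ ≤ Real.sqrt (((1 - β * γ * α / (β + γ)) * ‖v‖) ^ 2) := Real.sqrt_le_sqrt ha2
    _ = (1 - β * γ * α / (β + γ)) * ‖v‖ :=
        Real.sqrt_sq (mul_nonneg hb0 (norm_nonneg _))
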